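/- A block function f : ℕ → ℕ that is not almost identity satisfies at least one of: (a) there are infinitely many u such that u is the least element of its f-block and f(u) > u; (b) there are infinitely many pairs (u, v) with u < v lying in the same f-block, u the least element of that block, and f(v) = u. -/

import Mathlib

/-- `I` is an interval of `(ℕ, <)`. -/
def IsNatInterval (I : Set ℕ) : Prop :=
  ∀ ⦃a b c : ℕ⦄, a ∈ I → c ∈ I → a ≤ b → b ≤ c → b ∈ I

/-- `I` is `f`-closed: for all `x ∈ I`, `f x ∈ I` and `f ⁻¹ x ⊆ I`. -/
def FClosed (f : ℕ → ℕ) (I : Set ℕ) : Prop :=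
  ∀ x ∈ I, f x ∈ I ∧ ∀ y : ℕ, f y = x → y ∈ I

/-- A finite nonempty interval `I` is an `f`-block if it is `f`-closed, it cannot be
written as a disjoint union of several nonempty `f`-closed intervals, and the set of
elements below `I` is `f`-closed. -/
def IsFBlock (f : ℕ → ℕ) (I : Finset ℕ) : Prop :=
  I.Nonempty ∧ IsNatInterval ↑I ∧ FClosed f ↑I ∧
    (¬ ∃ J K : Set ℕ, J.Nonempty ∧ K.Nonempty ∧ IsNatInterval J ∧ IsNatInterval K ∧
        FClosed f J ∧ FClosed f K ∧ Disjoint J K ∧ J ∪ K = ↑I) ∧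
    FClosed f {x : ℕ | ∀ y ∈ I, x < y}

/-- `f` is a block function if every natural number lies in some `f`-block. -/
def BlockFunction (f : ℕ → ℕ) : Prop :=
  ∀ a : ℕ, ∃ I : Finset ℕ, a ∈ I ∧ IsFBlock f I

/-- Two blocks with a common least element `u` and comparable maxima are equal. -/
lemma block_eq_aux {f : ℕ → ℕ} {I I' : Finset ℕ} (hI : IsFBlock f I) (hI' : IsFBlock f I')
    {u : ℕ} (huI : u ∈ I) (huI' : u ∈ I') (hmin : ∀ y ∈ I, u ≤ y) (hmin' : ∀ y ∈ I', u ≤ y)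
    (hmax : I.max' hI.1 ≤ I'.max' hI'.1) : I = I' := by
  set m := I.max' hI.1 with hm
  set m' := I'.max' hI'.1 with hm'
  have cI : ∀ a : ℕ, a ∈ I ↔ u ≤ a ∧ a ≤ m := fun a =>
    ⟨fun ha => ⟨hmin a ha, I.le_max' a ha⟩,
     fun ⟨h1, h2⟩ => hI.2.1 huI (I.max'_mem hI.1) h1 h2⟩
  have cI' : ∀ a : ℕ, a ∈ I' ↔ u ≤ a ∧ a ≤ m' := fun a =>
    ⟨fun ha => ⟨hmin' a ha, I'.le_max' a ha⟩,
     fun ⟨h1, h2⟩ => hI'.2.1 huI' (I'.max'_mem hI'.1) h1 h2⟩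
  rcases eq_or_lt_of_le hmax with heq | hlt
  · ext a; rw [cI, cI', heq]
  · exfalso
    apply hI'.2.2.2.1
    refine ⟨↑I, Set.Ioc m m', ⟨u, huI⟩, ⟨m', by simp [Set.mem_Ioc, hlt]⟩, hI.2.1, ?_,
      hI.2.2.1, ?_, ?_, ?_⟩
    · intro a b c ha hc hab hbc
      exact ⟨lt_of_lt_of_le ha.1 hab, le_trans hbc hc.2⟩
    · intro x hx
      have hum : u ≤ m := I.le_max' u huI
      have hxI' : x ∈ I' := (cI' x).2 ⟨le_trans hum hx.1.le, hx.2⟩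
      have hfxI' : f x ∈ I' := (hI'.2.2.1 x hxI').1
      have hfxK : f x ∈ Set.Ioc m m' := by
        refine ⟨?_, ((cI' _).1 hfxI').2⟩
        by_contra hle
        push_neg at hle
        have hfxI : f x ∈ I := (cI _).2 ⟨(cI' _).1 hfxI' |>.1, hle⟩
        have : x ∈ I := (hI.2.2.1 (f x) hfxI).2 x rfl
        exact absurd ((cI x).1 this).2 (not_le.2 hx.1)
      refine ⟨hfxK, fun y hy => ?_⟩
      have hyI' : y ∈ I' := (hI'.2.2.1 x hxI').2 y hy
      refine ⟨?_, ((cI' _).1 hyI').2⟩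
      by_contra hle
      push_neg at hle
      have hyI : y ∈ I := (cI _).2 ⟨(cI' _).1 hyI' |>.1, hle⟩
      have hfyI : f y ∈ I := (hI.2.2.1 y hyI).1
      rw [hy] at hfyI
      exact absurd ((cI x).1 hfyI).2 (not_le.2 hx.1)
    · rw [Set.disjoint_left]
      intro a ha haK
      exact absurd ((cI a).1 ha).2 (not_le.2 haK.1)
    · ext a
      simp only [Set.mem_union, Finset.mem_coe, Set.mem_Ioc]
      constructor
      · rintro (ha | ha)
        · exact (cI' a).2 ⟨hmin a ha, le_trans (I.le_max' a ha) hmax⟩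
        · exact (cI' a).2 ⟨le_trans (I.le_max' u huI) ha.1.le, ha.2⟩
      · intro ha
        rcases le_or_gt a m with h | h
        · exact Or.inl ((cI a).2 ⟨(cI' a).1 ha |>.1, h⟩)
        · exact Or.inr ⟨h, ((cI' a).1 ha).2⟩

/-- Two blocks with a common least element are equal. -/
lemma block_eq_of_min {f : ℕ → ℕ} {I I' : Finset ℕ} (hI : IsFBlock f I) (hI' : IsFBlock f I')
    {u : ℕ} (huI : u ∈ I) (huI' : u ∈ I') (hmin : ∀ y ∈ I, u ≤ y) (hmin' : ∀ y ∈ I', u ≤ y) :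
    I = I' := by
  rcases le_total (I.max' hI.1) (I'.max' hI'.1) with h | h
  · exact block_eq_aux hI hI' huI huI' hmin hmin' h
  · exact (block_eq_aux hI' hI huI' huI hmin' hmin h).symm

/-- In a block of size at least two with least element `u`, either `u < f u` or some
larger element maps to `u`. -/
lemma block_dichotomy {f : ℕ → ℕ} {I : Finset ℕ} (hI : IsFBlock f I) {u w : ℕ}
    (huI : u ∈ I) (hmin : ∀ y ∈ I, u ≤ y) (hwI : w ∈ I) (hwu : w ≠ u) :
    u < f u ∨ ∃ v ∈ I, u < v ∧ f v = u := by
  by_contra h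
  push_neg at h
  obtain ⟨h1, h2⟩ := h
  have hfuI : f u ∈ I := (hI.2.2.1 u huI).1
  have hfu : f u = u := le_antisymm h1 (hmin _ hfuI)
  set m := I.max' hI.1 with hm
  have cI : ∀ a : ℕ, a ∈ I ↔ u ≤ a ∧ a ≤ m := fun a =>
    ⟨fun ha => ⟨hmin a ha, I.le_max' a ha⟩,
     fun ⟨ha1, ha2⟩ => hI.2.1 huI (I.max'_mem hI.1) ha1 ha2⟩
  apply hI.2.2.2.1
  refine ⟨{u}, Set.Ioc u m, ⟨u, rfl⟩, ⟨w, lt_of_le_of_ne (hmin w hwI) (Ne.symm hwu),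
      I.le_max' w hwI⟩, ?_, ?_, ?_, ?_, ?_, ?_⟩
  · intro a b c ha hc hab hbc
    simp only [Set.mem_singleton_iff] at ha hc ⊢
    omega
  · intro a b c ha hc hab hbc
    exact ⟨lt_of_lt_of_le ha.1 hab, le_trans hbc hc.2⟩
  · intro x hx
    rw [Set.mem_singleton_iff] at hx
    subst hx
    refine ⟨by simp [hfu], fun y hy => ?_⟩
    have hyI : y ∈ I := (hI.2.2.1 x huI).2 y hy
    rcases eq_or_lt_of_le (hmin y hyI) with he | hl
    · simp [← he]
    · exact absurd hy (h2 y hyI hl)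
  · intro x hx
    have hxI : x ∈ I := (cI x).2 ⟨hx.1.le, hx.2⟩
    have hfxI : f x ∈ I := (hI.2.2.1 x hxI).1
    have hfxne : f x ≠ u := h2 x hxI hx.1
    refine ⟨⟨lt_of_le_of_ne (hmin _ hfxI) (Ne.symm hfxne), ((cI _).1 hfxI).2⟩, fun y hy => ?_⟩
    have hyI : y ∈ I := (hI.2.2.1 x hxI).2 y hy
    refine ⟨?_, ((cI _).1 hyI).2⟩
    rcases eq_or_lt_of_le (hmin y hyI) with he | hl
    · exfalso; rw [← he, hfu] at hy; exact absurd hy (ne_of_lt hx.1)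
    · exact hl
  · rw [Set.disjoint_left]
    intro a ha haK
    rw [Set.mem_singleton_iff] at ha
    subst ha
    exact lt_irrefl a haK.1
  · ext a
    simp only [Set.mem_union, Set.mem_singleton_iff, Set.mem_Ioc, Finset.mem_coe, cI a]
    constructor
    · rintro (rfl | ha)
      · exact ⟨le_refl a, I.le_max' a huI⟩
      · exact ⟨ha.1.le, ha.2⟩
    · rintro ⟨ha1, ha2⟩
      rcases eq_or_lt_of_le ha1 with he | hl
      · exact Or.inl he.symm
      · exact Or.inr ⟨hl, ha2⟩

/-- A block function that is not almost identity satisfies (a) or (b): (a) infinitely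
many `u` are the least element of their `f`-block and satisfy `f u > u`; (b) there are
infinitely many pairs `(u, v)` in a common `f`-block with `u` its least element,
`u < v` and `f v = u`. -/
theorem stmt_17 (f : ℕ → ℕ) (hbf : BlockFunction f)
    (hni : ¬ {x : ℕ | f x ≠ x}.Finite) :
    {u : ℕ | (∃ I : Finset ℕ, IsFBlock f I ∧ u ∈ I ∧ ∀ y ∈ I, u ≤ y) ∧ u < f u}.Infinite ∨
      {p : ℕ × ℕ | ∃ I : Finset ℕ, IsFBlock f I ∧ p.1 ∈ I ∧ p.2 ∈ I ∧
        (∀ y ∈ I, p.1 ≤ y) ∧ p.1 < p.2 ∧ f p.2 = p.1}.Infinite := by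
  by_contra hcon
  push_neg at hcon
  obtain ⟨hA, hB⟩ := hcon
  -- For each u, the set of points lying in a block with least element u is finite.
  have hBl : ∀ u : ℕ,
      {x : ℕ | ∃ I : Finset ℕ, IsFBlock f I ∧ x ∈ I ∧ u ∈ I ∧ ∀ y ∈ I, u ≤ y}.Finite := by
    intro u
    rcases Set.eq_empty_or_nonempty
        {x : ℕ | ∃ I : Finset ℕ, IsFBlock f I ∧ x ∈ I ∧ u ∈ I ∧ ∀ y ∈ I, u ≤ y} with he | hne
    · rw [he]; exact Set.finite_empty
    · obtain ⟨x0, I0, hI0, _, hu0, hmin0⟩ := hne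
      apply Set.Finite.subset I0.finite_toSet
      rintro x ⟨I, hIb, hxI, huI, hminI⟩
      have := block_eq_of_min hIb hI0 huI hu0 hminI hmin0
      rw [← this]
      exact hxI
  apply hni
  have hU : ({u : ℕ | (∃ I : Finset ℕ, IsFBlock f I ∧ u ∈ I ∧ ∀ y ∈ I, u ≤ y) ∧ u < f u} ∪
      Prod.fst '' {p : ℕ × ℕ | ∃ I : Finset ℕ, IsFBlock f I ∧ p.1 ∈ I ∧ p.2 ∈ I ∧
        (∀ y ∈ I, p.1 ≤ y) ∧ p.1 < p.2 ∧ f p.2 = p.1}).Finite :=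
    hA.union (hB.image _)
  apply Set.Finite.subset (hU.biUnion (fun u _ => hBl u))
  intro x hx
  obtain ⟨I, hxI, hIb⟩ := hbf x
  set u := I.min' hIb.1 with hu
  have huI : u ∈ I := I.min'_mem hIb.1
  have hmin : ∀ y ∈ I, u ≤ y := fun y hy => I.min'_le y hy
  have hw : ∃ w ∈ I, w ≠ u := by
    by_cases hxu : x = u
    · refine ⟨f x, (hIb.2.2.1 x hxI).1, ?_⟩
      rw [← hxu]
      exact hx
    · exact ⟨x, hxI, hxu⟩
  obtain ⟨w, hwI, hwu⟩ := hw
  have hxBl : x ∈ {x : ℕ | ∃ I : Finset ℕ, IsFBlock f I ∧ x ∈ I ∧ u ∈ I ∧ ∀ y ∈ I, u ≤ y} :=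
    ⟨I, hIb, hxI, huI, hmin⟩
  rcases block_dichotomy hIb huI hmin hwI hwu with hcase | ⟨v, hvI, huv, hfv⟩
  · exact Set.mem_biUnion (Or.inl ⟨⟨I, hIb, huI, hmin⟩, hcase⟩) hxBl
  · exact Set.mem_biUnion (Or.inr ⟨(u, v), ⟨I, hIb, huI, hvI, hmin, huv, hfv⟩, rfl⟩) hxBl
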